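/- arXiv:1602.06003 — 2 statements merged into one kernel-verified Lean document; each statement's English description precedes it below -/
import Mathlib

section
/- If G is a finite group of unit spinors in Cl(3) (closed under multiplication, containing -R and R̃ whenever it contains R), then G, viewed as a set of vectors in 4D Euclidean space via the norm R R̃, is a root system: it contains with each element R only the scalar multiples ±R, and it is closed under the reflections s_{R₁}(R₂) = R₂ - 2(R₁,R₂)/(R₁,R₁) R₁ for all R₁ ∈ G. -/
noncomputable section
open CliffordAlgebra

/-- The quadratic form of Euclidean ℝ³. -/
def Q3 : QuadraticForm ℝ (Fin 3 → ℝ) :=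
  QuadraticMap.weightedSumSquares ℝ (fun _ : Fin 3 => (1 : ℝ))

/-- The Clifford algebra Cl(3) of Euclidean ℝ³. -/
abbrev Cl3 := CliffordAlgebra Q3

/-- The orthonormal generators e₁, e₂, e₃ of Cl(3). -/
def e (i : Fin 3) : Cl3 := ι Q3 (Pi.single i 1)

/-- The spinor pairing `(R₁, R₂) = ½(R₁ R̃₂ + R₂ R̃₁)` on Cl(3); for even elements it is a
scalar, and it realises the 4D Euclidean inner product on the even subalgebra. -/
def spinorForm (R₁ R₂ : Cl3) : Cl3 :=
  (1 / 2 : ℝ) • (R₁ * reverse (Q := Q3) R₂ + R₂ * reverse (Q := Q3) R₁)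

/-- **Induction Theorem.** A finite group `G` of unit spinors in Cl(3)
(closed under multiplication, and containing `-R` and `R̃` whenever it contains `R`),
viewed as a set of vectors in the 4D Euclidean even subalgebra, is a root system:
it contains with each `R` only the scalar multiples `±R`, and it is closed under the
reflections `s_{R₁}(R₂) = R₂ - 2(R₁,R₂)/(R₁,R₁) R₁` (note `(R₁,R₁) = R₁R̃₁ = 1`). -/
theorem spinor_group_induces_root_system
    (G : Set Cl3) (hfin : G.Finite)
    (heven : ∀ R ∈ G, R ∈ evenOdd Q3 0)
    (hunit : ∀ R ∈ G, R * reverse (Q := Q3) R = 1)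
    (hone : (1 : Cl3) ∈ G)
    (hmul : ∀ R₁ ∈ G, ∀ R₂ ∈ G, R₁ * R₂ ∈ G)
    (hneg : ∀ R ∈ G, -R ∈ G)
    (hrev : ∀ R ∈ G, reverse (Q := Q3) R ∈ G) :
    (∀ R ∈ G, ∀ c : ℝ, c • R ∈ G → c • R = R ∨ c • R = -R) ∧
    (∀ R₁ ∈ G, ∀ R₂ ∈ G, R₂ - ((2 : ℝ) • spinorForm R₁ R₂) * R₁ ∈ G) := by
  have hrr : ∀ R ∈ G, reverse (Q := Q3) R * R = 1 := by
    intro R hR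
    have := hunit _ (hrev R hR)
    rwa [reverse_reverse] at this
  constructor
  · intro R hR c hc
    have h1 := hunit _ hc
    rw [map_smul, smul_mul_assoc, mul_smul_comm, hunit R hR, smul_smul] at h1
    have hinj : Function.Injective (algebraMap ℝ Cl3) := by
      haveI : Invertible (2 : ℝ) := invertibleOfNonzero two_ne_zero
      exact (algebraMap ℝ Cl3).injective
    have hc2 : c * c = 1 := by
      apply hinj
      rw [Algebra.algebraMap_eq_smul_one, map_one]
      exact h1
    rcases mul_self_eq_one_iff.mp hc2 with h | h
    · left; rw [h, one_smul]
    · right; rw [h, neg_one_smul]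
  · intro R₁ h₁ R₂ h₂
    have key : R₂ - ((2 : ℝ) • spinorForm R₁ R₂) * R₁
        = -(R₁ * reverse (Q := Q3) R₂ * R₁) := by
      unfold spinorForm
      rw [smul_smul]
      norm_num
      rw [add_mul, mul_assoc R₂, hrr R₁ h₁, mul_one]
      abel
    rw [key]
    rw [mul_assoc]
    exact hneg _ (hmul _ h₁ _ (hmul _ (hrev _ h₂) _ h₁))
end
end

section
/- In Cl(3), each of the 16 spinors ½(±1 ± e₁e₂ ± e₂e₃ ± e₃e₁) equals ±exp(πB/3) for a bivector B with B² = -1 of the form B = (±e₁e₂ ± e₂e₃ ± e₃e₁)/√3, and hence has multiplicative order dividing 6 (order 3 or 6). -/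
noncomputable section
open CliffordAlgebra

lemma Q3_apply (v : Fin 3 → ℝ) : Q3 v = v 0 * v 0 + v 1 * v 1 + v 2 * v 2 := by
  simp [Q3, QuadraticMap.weightedSumSquares_apply, Fin.sum_univ_three]

lemma e_mul_self (i : Fin 3) : e i * e i = 1 := by
  rw [e, ι_sq_scalar]
  fin_cases i <;> simp [Q3_apply]

lemma e_anti {i j : Fin 3} (h : i ≠ j) : e i * e j = -(e j * e i) := by
  have := CliffordAlgebra.ι_mul_ι_add_swap (Q := Q3) (Pi.single i 1) (Pi.single j 1)
  have hp : QuadraticMap.polar Q3 (Pi.single i 1) (Pi.single j 1) = 0 := by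
    rw [QuadraticMap.polar]
    fin_cases i <;> fin_cases j <;> simp_all [Q3_apply]
  rw [hp, map_zero] at this
  rw [e, e, eq_neg_iff_add_eq_zero]
  exact this

lemma mul_contract (i j k : Fin 3) : (e i * e j) * (e j * e k) = e i * e k := by
  rw [mul_assoc, ← mul_assoc (e j), e_mul_self, one_mul]

lemma eij_sq {i j : Fin 3} (h : i ≠ j) : (e i * e j) * (e i * e j) = -1 := by
  rw [mul_assoc, ← mul_assoc (e j), e_anti (Ne.symm h)]
  simp [mul_assoc, e_mul_self]

lemma mul_contract' {i j k : Fin 3} (hij : i ≠ j) (hki : k ≠ i) :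
    (e i * e j) * (e k * e i) = e j * e k := by
  rw [e_anti hki, mul_neg, mul_assoc, ← mul_assoc (e j), e_anti (Ne.symm hij)]
  simp [mul_assoc, ← mul_assoc (e i) (e i), e_mul_self]

lemma hab' : (e 0 * e 1) * (e 1 * e 2) = -(e 2 * e 0) := by
  rw [mul_contract, e_anti (by decide : (0:Fin 3) ≠ 2)]
lemma hba' : (e 1 * e 2) * (e 0 * e 1) = e 2 * e 0 :=
  mul_contract' (by decide) (by decide)
lemma hbc' : (e 1 * e 2) * (e 2 * e 0) = -(e 0 * e 1) := by
  rw [mul_contract, e_anti (by decide : (1:Fin 3) ≠ 0)]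
lemma hcb' : (e 2 * e 0) * (e 1 * e 2) = e 0 * e 1 :=
  mul_contract' (by decide) (by decide)
lemma hca' : (e 2 * e 0) * (e 0 * e 1) = -(e 1 * e 2) := by
  rw [mul_contract, e_anti (by decide : (2:Fin 3) ≠ 1)]
lemma hac' : (e 0 * e 1) * (e 2 * e 0) = e 1 * e 2 :=
  mul_contract' (by decide) (by decide)
lemma haa' : (e 0 * e 1) * (e 0 * e 1) = -1 := eij_sq (by decide)
lemma hbb' : (e 1 * e 2) * (e 1 * e 2) = -1 := eij_sq (by decide)
lemma hcc' : (e 2 * e 0) * (e 2 * e 0) = -1 := eij_sq (by decide)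

/-- The square of a unit-coefficient bivector combination. -/
lemma bivec_sq (x y z : ℝ) (hx : x * x = 1) (hy : y * y = 1) (hz : z * z = 1) :
    (x • (e 0 * e 1) + y • (e 1 * e 2) + z • (e 2 * e 0)) *
      (x • (e 0 * e 1) + y • (e 1 * e 2) + z • (e 2 * e 0)) = (-3 : ℝ) • 1 := by
  simp only [mul_add, add_mul, smul_mul_assoc, mul_smul_comm, smul_smul,
    haa', hbb', hcc', hab', hba', hbc', hcb', hca', hac']
  match_scalars
  · linear_combination (-1 : ℝ) * hx - hy - hz
  all_goals ring

/-- Each of the 16 spinors `½(±1 ± e₁e₂ ± e₂e₃ ± e₃e₁)` in Cl(3) equals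
`± exp(πB/3)` for a bivector `B = (±e₁e₂ ± e₂e₃ ± e₃e₁)/√3` with `B² = -1` (the exponential
power series is expressed weakly, via arbitrary linear functionals), and hence has
multiplicative order dividing 6, in fact order 3 or 6. -/
theorem sixteen_spinors_are_exponentials
    (s : Fin 4 → ℝ) (hs : ∀ i, s i = 1 ∨ s i = -1)
    (R : Cl3)
    (hR : R = (1 / 2 : ℝ) •
        (s 0 • (1 : Cl3) + s 1 • (e 0 * e 1) + s 2 • (e 1 * e 2) + s 3 • (e 2 * e 0))) :
    (∃ (σ : ℝ) (t : Fin 3 → ℝ) (B : Cl3),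
      (σ = 1 ∨ σ = -1) ∧ (∀ i, t i = 1 ∨ t i = -1) ∧
      B = (Real.sqrt 3)⁻¹ •
            (t 0 • (e 0 * e 1) + t 1 • (e 1 * e 2) + t 2 • (e 2 * e 0)) ∧
      B * B = -1 ∧
      (∀ f : Cl3 →ₗ[ℝ] ℝ,
        HasSum (fun n : ℕ => ((Real.pi / 3) ^ n / n.factorial) • f (B ^ n)) (f (σ • R)))) ∧
    R ^ 6 = 1 ∧ R ^ 2 ≠ 1 := by
  have h0 : s 0 * s 0 = 1 := by rcases hs 0 with h | h <;> rw [h] <;> norm_num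
  have h1 : s 1 * s 1 = 1 := by rcases hs 1 with h | h <;> rw [h] <;> norm_num
  have h2 : s 2 * s 2 = 1 := by rcases hs 2 with h | h <;> rw [h] <;> norm_num
  have h3 : s 3 * s 3 = 1 := by rcases hs 3 with h | h <;> rw [h] <;> norm_num
  obtain ⟨w, hw⟩ : ∃ w : Cl3,
      w = s 1 • (e 0 * e 1) + s 2 • (e 1 * e 2) + s 3 • (e 2 * e 0) := ⟨_, rfl⟩
  have hww : w * w = (-3 : ℝ) • 1 := by rw [hw]; exact bivec_sq _ _ _ h1 h2 h3
  have hRw : R = (1 / 2 : ℝ) • (s 0 • (1 : Cl3) + w) := by rw [hR, hw]; module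
  have hR2 : R * R = (1 / 2 : ℝ) • ((s 0) • w + (-1 : ℝ) • (1 : Cl3)) := by
    rw [hRw]
    simp only [smul_mul_assoc, mul_smul_comm, mul_add, add_mul, smul_smul, one_mul, mul_one, hww]
    match_scalars
    · linear_combination (1/4 : ℝ) * h0
    · ring
  have hR3 : (R * R) * R = (-(s 0)) • 1 := by
    rw [hR2, hRw]
    simp only [smul_mul_assoc, mul_smul_comm, mul_add, add_mul, smul_smul, one_mul,
      mul_one, hww]
    match_scalars
    · linear_combination (1/4 : ℝ) * h0
    · ring
  have hcube : R ^ 3 = (-(s 0)) • 1 := by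
    rw [pow_succ, pow_two]; exact hR3
  have h6 : R ^ 6 = 1 := by
    have : R ^ 6 = (R ^ 3) * (R ^ 3) := by rw [← pow_add]
    rw [this, hcube, smul_mul_smul_comm, one_mul]
    have : -s 0 * -s 0 = 1 := by linear_combination h0
    rw [this, one_smul]
  have hne : R ^ 2 ≠ 1 := by
    intro hR2eq
    have hRval : R = (-(s 0)) • 1 := by
      have : R ^ 3 = R ^ 2 * R := by rw [← pow_succ]
      rw [hR2eq, one_mul] at this
      rw [← this, hcube]
    have hweq : w = (-(3 * s 0)) • 1 := by
      have h2R : (2 : ℝ) • R = s 0 • (1 : Cl3) + w := by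
        rw [hRw, smul_smul]; norm_num
      rw [hRval, smul_smul] at h2R
      have : w = ((2 : ℝ) * -s 0) • (1 : Cl3) - s 0 • 1 := by
        rw [h2R]; abel
      rw [this]; module
    rw [hweq, smul_mul_smul_comm, one_mul] at hww
    have h9 : -(3 * s 0) * -(3 * s 0) = 9 := by linear_combination 9 * h0
    rw [h9] at hww
    have h12 : ((9 : ℝ) - (-3)) • (1 : Cl3) = 0 := by rw [sub_smul, hww, sub_self]
    norm_num at h12
  refine ⟨?_, h6, hne⟩
  have h3ne : Real.sqrt 3 ≠ 0 := by
    rw [Real.sqrt_ne_zero']; norm_num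
  obtain ⟨w', hw'⟩ : ∃ w' : Cl3, w' = (s 0 * s 1) • (e 0 * e 1) + (s 0 * s 2) • (e 1 * e 2)
      + (s 0 * s 3) • (e 2 * e 0) := ⟨_, rfl⟩
  have hw'w' : w' * w' = (-3 : ℝ) • 1 := by
    rw [hw']
    exact bivec_sq _ _ _ (by linear_combination (s 1 * s 1) * h0 + h1)
      (by linear_combination (s 2 * s 2) * h0 + h2)
      (by linear_combination (s 3 * s 3) * h0 + h3)
  have hw's : w' = s 0 • w := by rw [hw', hw]; module
  have hBB : ((Real.sqrt 3)⁻¹ • w') * ((Real.sqrt 3)⁻¹ • w') = -1 := by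
    rw [smul_mul_smul_comm, hw'w', smul_smul]
    have hs3 : (Real.sqrt 3)⁻¹ * (Real.sqrt 3)⁻¹ * (-3) = -1 := by
      rw [← mul_inv, Real.mul_self_sqrt (by norm_num : (0:ℝ) ≤ 3)]; norm_num
    rw [hs3, neg_smul, one_smul]
  have hkey : s 0 • R = (Real.cos (Real.pi/3)) • (1 : Cl3)
      + (Real.sin (Real.pi/3)) • ((Real.sqrt 3)⁻¹ • w') := by
    rw [Real.cos_pi_div_three, Real.sin_pi_div_three, hRw, hw's]
    rw [smul_smul (Real.sqrt 3 / 2)]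
    have : Real.sqrt 3 / 2 * (Real.sqrt 3)⁻¹ = 1/2 := by
      field_simp
    rw [this]
    match_scalars
    · linear_combination (1/2 : ℝ) * h0
    · ring
  refine ⟨s 0, ![s 0 * s 1, s 0 * s 2, s 0 * s 3], (Real.sqrt 3)⁻¹ • w', hs 0, ?_, ?_, hBB, ?_⟩
  · intro i
    fin_cases i <;>
      simp only [Matrix.cons_val_zero, Matrix.cons_val_one, Matrix.head_cons,
        Matrix.cons_val_two, Matrix.tail_cons] <;>
    · rcases hs 0 with h | h <;> rcases hs 1 with h1' | h1' <;> rcases hs 2 with h2' | h2' <;>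
        rcases hs 3 with h3' | h3' <;> rw [h, h1', h2', h3'] <;> norm_num
  · rw [hw']
    simp only [Matrix.cons_val_zero, Matrix.cons_val_one, Matrix.head_cons,
      Matrix.cons_val_two, Matrix.tail_cons]
  · intro f
    have hB2 : ((Real.sqrt 3)⁻¹ • w') ^ 2 = -1 := by rw [sq]; exact hBB
    have hm1 : (-1 : Cl3) = ((-1 : ℝ)) • 1 := by simp
    have heven : ∀ k : ℕ, ((Real.sqrt 3)⁻¹ • w') ^ (2 * k) = ((-1 : ℝ) ^ k) • 1 := by
      intro k; rw [pow_mul, hB2, hm1, smul_pow, one_pow]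
    have hodd : ∀ k : ℕ, ((Real.sqrt 3)⁻¹ • w') ^ (2 * k + 1)
        = ((-1 : ℝ) ^ k) • ((Real.sqrt 3)⁻¹ • w') := by
      intro k; rw [pow_succ, heven, smul_mul_assoc, one_mul]
    have he : HasSum (fun k : ℕ => ((Real.pi/3) ^ (2*k) / (2*k).factorial)
          • f (((Real.sqrt 3)⁻¹ • w') ^ (2*k)))
        (Real.cos (Real.pi/3) * f 1) := by
      have hfun : (fun k : ℕ => ((Real.pi/3) ^ (2*k) / (2*k).factorial)
            • f (((Real.sqrt 3)⁻¹ • w') ^ (2*k)))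
          = fun k : ℕ => ((-1) ^ k * (Real.pi/3) ^ (2*k) / (2*k).factorial) * f 1 := by
        funext k; rw [heven k, map_smul]; simp only [smul_eq_mul]; ring
      rw [hfun]
      exact (Real.hasSum_cos (Real.pi/3)).mul_right (f 1)
    have ho : HasSum (fun k : ℕ => ((Real.pi/3) ^ (2*k+1) / (2*k+1).factorial)
          • f (((Real.sqrt 3)⁻¹ • w') ^ (2*k+1)))
        (Real.sin (Real.pi/3) * f ((Real.sqrt 3)⁻¹ • w')) := by
      have hfun : (fun k : ℕ => ((Real.pi/3) ^ (2*k+1) / (2*k+1).factorial)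
            • f (((Real.sqrt 3)⁻¹ • w') ^ (2*k+1)))
          = fun k : ℕ => ((-1) ^ k * (Real.pi/3) ^ (2*k+1) / (2*k+1).factorial)
              * f ((Real.sqrt 3)⁻¹ • w') := by
        funext k; rw [hodd k, map_smul]; simp only [smul_eq_mul]; ring
      rw [hfun]
      exact (Real.hasSum_sin (Real.pi/3)).mul_right (f ((Real.sqrt 3)⁻¹ • w'))
    have hval : f (s 0 • R) = Real.cos (Real.pi/3) * f 1
        + Real.sin (Real.pi/3) * f ((Real.sqrt 3)⁻¹ • w') := by
      rw [hkey, map_add, map_smul, map_smul, smul_eq_mul, smul_eq_mul]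
    rw [hval]
    exact HasSum.even_add_odd he ho
end
end
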